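/- Let m ≥ 1. If X ⊆ ℝ^m is a conical limit set and U ⊆ ℝ^m is open, then X ∩ U is a conical limit set. -/

import Mathlib

open Filter Topology

/-- The open upper half-space over a normed space `V`: pairs `(t, v)` with `t > 0`. -/
def upperHalf (V : Type*) [NormedAddCommGroup V] : Set (ℝ × V) := {p | 0 < p.1}

/-- The conical limit set of `E ⊆ ℝ × V`: points `x` for which there are `C > 0` and a
sequence `(t_n, v_n)` in `E` with `t_n → 0`, `v_n → x` and `‖v_n - x‖ ≤ C * t_n`. -/
def conicalLimitSet {V : Type*} [NormedAddCommGroup V] (E : Set (ℝ × V)) : Set V :=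
  {x | ∃ C > 0, ∃ w : ℕ → ℝ × V, (∀ n, w n ∈ E) ∧
    Tendsto (fun n => (w n).1) atTop (𝓝 (0 : ℝ)) ∧
    Tendsto (fun n => (w n).2) atTop (𝓝 x) ∧
    ∀ n, ‖(w n).2 - x‖ ≤ C * (w n).1}

/-- `X ⊆ V` is a conical limit set if it is the conical limit set of some subset of the
upper half-space. -/
def IsConicalLimitSet {V : Type*} [NormedAddCommGroup V] (X : Set V) : Prop :=
  ∃ E ⊆ upperHalf V, conicalLimitSet E = X

/-- The intersection of a conical limit set in `ℝ^m` with an open set is a conical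
limit set. -/
theorem isConicalLimitSet_inter_open (m : ℕ) (hm : 1 ≤ m)
    (X U : Set (EuclideanSpace ℝ (Fin m))) (hX : IsConicalLimitSet X)
    (hU : IsOpen U) :
    IsConicalLimitSet (X ∩ U) := by
  obtain ⟨E, hE, hEX⟩ := hX
  refine ⟨{p ∈ E | Metric.closedBall p.2 (Real.sqrt p.1) ⊆ U},
    fun p hp => hE hp.1, ?_⟩
  ext x
  constructor
  · rintro ⟨C, hC, w, hw, ht, hv, hb⟩
    constructor
    · rw [← hEX]; exact ⟨C, hC, w, fun n => (hw n).1, ht, hv, hb⟩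
    · have hpos : ∀ n, 0 < (w n).1 := fun n => hE (hw n).1
      have hev : ∀ᶠ n in atTop, (w n).1 < C⁻¹ ^ 2 := by
        apply ht.eventually_lt_const
        positivity
      obtain ⟨n, hn⟩ := hev.exists
      set t := (w n).1 with htdef
      have hsq : Real.sqrt t ≤ C⁻¹ := by
        have h1 : Real.sqrt t ≤ Real.sqrt (C⁻¹ ^ 2) :=
          Real.sqrt_le_sqrt hn.le
        rwa [Real.sqrt_sq (by positivity)] at h1
      have hCt : C * t ≤ Real.sqrt t := by
        have h2 : Real.sqrt t * Real.sqrt t = t := Real.mul_self_sqrt (hpos n).le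
        have h5 : C * Real.sqrt t ≤ 1 := by
          have := mul_le_mul_of_nonneg_left hsq hC.le
          rwa [mul_inv_cancel₀ hC.ne'] at this
        nlinarith [Real.sqrt_nonneg t, hC]
      apply (hw n).2
      rw [Metric.mem_closedBall, dist_eq_norm, norm_sub_rev]
      exact (hb n).trans hCt
  · rintro ⟨hxX, hxU⟩
    rw [← hEX] at hxX
    obtain ⟨C, hC, w, hw, ht, hv, hb⟩ := hxX
    obtain ⟨ε, hε, hball⟩ := Metric.isOpen_iff.1 hU x hxU
    have hev : ∀ᶠ n in atTop, (w n).1 < min (ε / (2 * C)) ((ε / 2) ^ 2) := by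
      apply ht.eventually_lt_const
      positivity
    obtain ⟨N, hN⟩ := eventually_atTop.1 hev
    refine ⟨C, hC, fun n => w (n + N), fun n => ⟨hw _, ?_⟩,
      ht.comp (tendsto_add_atTop_nat N), hv.comp (tendsto_add_atTop_nat N),
      fun n => hb _⟩
    intro y hy
    apply hball
    have h2 := hN (n + N) (Nat.le_add_left N n)
    have hpos : (0:ℝ) < (w (n + N)).1 := hE (hw (n + N))
    rw [Metric.mem_closedBall, dist_eq_norm] at hy
    rw [Metric.mem_ball, dist_eq_norm]
    have hsq : Real.sqrt (w (n + N)).1 < ε / 2 := by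
      have h3 : Real.sqrt (w (n + N)).1 < Real.sqrt ((ε / 2) ^ 2) :=
        Real.sqrt_lt_sqrt hpos.le (lt_of_lt_of_le h2 (min_le_right _ _))
      rwa [Real.sqrt_sq (by positivity)] at h3
    have hCt : C * (w (n + N)).1 < ε / 2 := by
      have h4 : (w (n + N)).1 < ε / (2 * C) := lt_of_lt_of_le h2 (min_le_left _ _)
      calc C * (w (n + N)).1 < C * (ε / (2 * C)) := by
            exact mul_lt_mul_of_pos_left h4 hC
        _ = ε / 2 := by field_simp
    calc ‖y - x‖ ≤ ‖y - (w (n + N)).2‖ + ‖(w (n + N)).2 - x‖ :=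
          norm_sub_le_norm_sub_add_norm_sub _ _ _
      _ ≤ Real.sqrt (w (n + N)).1 + C * (w (n + N)).1 := add_le_add hy (hb _)
      _ < ε / 2 + ε / 2 := add_lt_add hsq hCt
      _ = ε := by ring
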